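/- Let α,β,γ,δ ∈ ℝ and λ ∈ ℂ with λ ∉ ℝ. If (λ−α)(λ−β)(λ−γ)(λ−δ) = (1−α)(1−β)(1−γ)(1−δ) and α,β,γ,δ ∈ [0,1), then λ is an eigenvalue of the 4×4 matrix A(α,β,γ,δ) with rows (α,1−α,0,0), (0,β,1−β,0), (0,0,γ,1−γ), (1−δ,0,0,δ). -/
import Mathlib


open Matrix

/-- The 4×4 row-stochastic "4-cycle" matrix, viewed as a complex matrix. -/
def cycMat (α β γ δ : ℝ) : Matrix (Fin 4) (Fin 4) ℂ :=
  !![(α : ℂ), 1 - α, 0, 0;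
     0, (β : ℂ), 1 - β, 0;
     0, 0, (γ : ℂ), 1 - γ;
     1 - δ, 0, 0, (δ : ℂ)]

theorem stmt_2 (α β γ δ : ℝ)
    (hα : α ∈ Set.Ico (0:ℝ) 1) (hβ : β ∈ Set.Ico (0:ℝ) 1)
    (hγ : γ ∈ Set.Ico (0:ℝ) 1) (hδ : δ ∈ Set.Ico (0:ℝ) 1)
    (lam : ℂ) (hlam : lam.im ≠ 0)
    (hprod : (lam - α) * (lam - β) * (lam - γ) * (lam - δ)
      = (1 - α) * (1 - β) * (1 - γ) * (1 - δ)) :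
    ∃ v : Fin 4 → ℂ, v ≠ 0 ∧ (cycMat α β γ δ).mulVec v = lam • v := by
  have ha : ((1:ℂ) - α) ≠ 0 := by
    intro h; apply_fun Complex.re at h; simp at h; linarith [hα.2]
  have hb : ((1:ℂ) - β) ≠ 0 := by
    intro h; apply_fun Complex.re at h; simp at h; linarith [hβ.2]
  have hc : ((1:ℂ) - γ) ≠ 0 := by
    intro h; apply_fun Complex.re at h; simp at h; linarith [hγ.2]
  refine ⟨![1, (lam - α) / (1 - α),
    (lam - α) * (lam - β) / ((1 - α) * (1 - β)),
    (lam - α) * (lam - β) * (lam - γ) / ((1 - α) * (1 - β) * (1 - γ))], ?_, ?_⟩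
  · intro h
    have := congrFun h 0
    simp at this
  · funext i
    fin_cases i <;>
      simp [cycMat, mulVec, dotProduct, Fin.sum_univ_four] <;>
      field_simp <;> ring_nf
    linear_combination (-1:ℂ) * hprod
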